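/- Let X ∈ aut_CR(M) be an infinitesimal CR-automorphism of M and let X = X_{−ρ} + ⋯ + X_{−1} + X_0 + X_1 + ⋯ be its decomposition into weighted homogeneous components X_t of weight t, where X_t = Σ_j Z^j_{(1+t)} ∂_{z_j} + Σ_l W^l_{(ℓ_l+t)} ∂_{w_l} and F_{(d)} denotes the sum of the terms of weighted degree d in the Taylor expansion of F at 0. Then each component X_t is itself an infinitesimal CR-automorphism of M, i.e. X_t ∈ aut_CR(M) for every t ≥ −ρ. -/

import Mathlib

open MvPolynomial Complex

noncomputable section

/-- The complex variables (z_1,…,z_n,w_1,…,w_k). -/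
abbrev ZW (n k : ℕ) := Sum (Fin n) (Fin k)

/-- The (real) arguments (z, z̄, u) of the defining polynomials Φ_l. -/
abbrev ZZU (n k : ℕ) := Sum (Fin n) (Sum (Fin n) (Fin k))

/-- Weights: each `z_j` has weight 1, each `w_l` has weight `ℓ l`. -/
def wtZW (n k : ℕ) (ℓ : Fin k → ℤ) : ZW n k → ℤ :=
  Sum.elim (fun _ => 1) ℓ

/-- Weights on (z, z̄, u): a conjugate variable or a real part carries the same weight
as the variable itself. -/
def wtZZU (n k : ℕ) (ℓ : Fin k → ℤ) : ZZU n k → ℤ :=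
  Sum.elim (fun _ => 1) (Sum.elim (fun _ => 1) ℓ)

/-- The point (z, z̄, u) at which the defining polynomials are evaluated,
where u = Re w. -/
def zzuPt {n k : ℕ} (z : Fin n → ℂ) (w : Fin k → ℂ) : ZZU n k → ℂ :=
  Sum.elim z (Sum.elim (fun j => starRingEnd ℂ (z j)) (fun l => ((w l).re : ℂ)))

/-- The point (z, w) of ℂ^{n+k}. -/
def zwPt {n k : ℕ} (z : Fin n → ℂ) (w : Fin k → ℂ) : ZW n k → ℂ :=
  Sum.elim z w

/-- The CR-generic submanifold M = {(z,w) : v_l = Φ_l(z, z̄, u), l = 1,…,k},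
where w_l = u_l + i v_l. -/
def Mset (n k : ℕ) (Φ : Fin k → MvPolynomial (ZZU n k) ℂ) :
    Set ((Fin n → ℂ) × (Fin k → ℂ)) :=
  {p | ∀ l, (((p.2 l).im : ℂ)) = eval (zzuPt p.1 p.2) (Φ l)}

/-- The holomorphic vector field X = Σ_j Z^j ∂_{z_j} + Σ_l W^l ∂_{w_l} (with polynomial
coefficients) is an infinitesimal CR-automorphism of M when (X + X̄)[v_l − Φ_l] vanishes
at every point of M, for every l.  Here, using v_l = (w_l − w̄_l)/(2i) and
u_m = (w_m + w̄_m)/2, one has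
(X + X̄)[v_l − Φ_l] = (W^l − conj W^l)/(2i) − Σ_j Z^j ∂Φ_l/∂z_j
  − Σ_j conj(Z^j) ∂Φ_l/∂z̄_j − Σ_m ((W^m + conj W^m)/2) ∂Φ_l/∂u_m. -/
def IsCRAut (n k : ℕ) (Φ : Fin k → MvPolynomial (ZZU n k) ℂ)
    (Z : Fin n → MvPolynomial (ZW n k) ℂ) (W : Fin k → MvPolynomial (ZW n k) ℂ) : Prop :=
  ∀ z w, (z, w) ∈ Mset n k Φ → ∀ l,
    (eval (zwPt z w) (W l) - starRingEnd ℂ (eval (zwPt z w) (W l))) / (2 * I)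
      - (∑ j, eval (zwPt z w) (Z j) * eval (zzuPt z w) (pderiv (Sum.inl j) (Φ l)))
      - (∑ j, starRingEnd ℂ (eval (zwPt z w) (Z j)) *
          eval (zzuPt z w) (pderiv (Sum.inr (Sum.inl j)) (Φ l)))
      - (∑ m, ((eval (zwPt z w) (W m) + starRingEnd ℂ (eval (zwPt z w) (W m))) / 2) *
          eval (zzuPt z w) (pderiv (Sum.inr (Sum.inr m)) (Φ l)))
      = 0

/-- A vector field is weighted homogeneous of weight `t` iff each coefficient `Z^j` of
`∂_{z_j}` is weighted homogeneous of weight `1 + t` and each coefficient `W^l` of `∂_{w_l}`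
is weighted homogeneous of weight `ℓ l + t`. -/
def IsHomVF (n k : ℕ) (ℓ : Fin k → ℤ) (t : ℤ)
    (Z : Fin n → MvPolynomial (ZW n k) ℂ) (W : Fin k → MvPolynomial (ZW n k) ℂ) : Prop :=
  (∀ j, (Z j).IsWeightedHomogeneous (wtZW n k ℓ) (1 + t)) ∧
  (∀ l, (W l).IsWeightedHomogeneous (wtZW n k ℓ) (ℓ l + t))


namespace CRaux

open Finsupp Finset

variable {σ : Type*}

/-- natural weighted degree -/
def degN (w : σ → ℤ) (m : σ →₀ ℕ) : ℕ := m.sum fun i c => c * (w i).toNat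

lemma weight_eq_degN (w : σ → ℤ) (hw : ∀ i, 0 ≤ w i) (m : σ →₀ ℕ) :
    (Finsupp.weight w m : ℤ) = (degN w m : ℤ) := by
  rw [Finsupp.weight_apply, degN, Finsupp.sum, Finsupp.sum, Nat.cast_sum]
  refine Finset.sum_congr rfl fun i _ => ?_
  have := hw i
  push_cast
  rw [Int.toNat_of_nonneg this, nsmul_eq_mul]

lemma weight_nonneg (w : σ → ℤ) (hw : ∀ i, 0 ≤ w i) (m : σ →₀ ℕ) :
    (0:ℤ) ≤ Finsupp.weight w m := by
  rw [weight_eq_degN w hw m]; positivity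

lemma eval_scaled (w : σ → ℤ) (c : ℂ) (x : σ → ℂ) (P : MvPolynomial σ ℂ) :
    eval (fun i => c ^ (w i).toNat * x i) P
      = ∑ m ∈ P.support, P.coeff m * c ^ degN w m * ∏ i ∈ m.support, x i ^ m i := by
  rw [eval_eq]
  refine Finset.sum_congr rfl fun m _ => ?_
  rw [mul_assoc]
  congr 1
  simp only [mul_pow]
  rw [Finset.prod_mul_distrib]
  congr 1
  rw [degN, Finsupp.sum, ← Finset.prod_pow_eq_pow_sum]
  exact Finset.prod_congr rfl fun i _ => by rw [← pow_mul, mul_comm]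

lemma eval_scaled_homog (w : σ → ℤ) (hw : ∀ i, 0 ≤ w i) (c : ℂ) (x : σ → ℂ)
    (P : MvPolynomial σ ℂ) (d : ℤ)
    (h : ∀ m ∈ P.support, Finsupp.weight w m = d) :
    eval (fun i => c ^ (w i).toNat * x i) P = c ^ d.toNat * eval x P := by
  rw [eval_scaled, eval_eq, Finset.mul_sum]
  refine Finset.sum_congr rfl fun m hm => ?_
  have h1 : degN w m = d.toNat := by
    have h2 := h m hm
    rw [weight_eq_degN w hw m] at h2
    omega
  rw [h1]; ring

lemma comp_eq_zero (w : σ → ℤ) (d : ℤ) (P : MvPolynomial σ ℂ)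
    (h : ∀ m ∈ P.support, (Finsupp.weight w m : ℤ) ≠ d) :
    weightedHomogeneousComponent w d P = 0 := by
  classical
  ext m
  rw [coeff_weightedHomogeneousComponent, coeff_zero]
  split_ifs with hc
  · by_cases hm : m ∈ P.support
    · exact absurd hc (h m hm)
    · simpa [MvPolynomial.notMem_support_iff] using hm
  · rfl

lemma eval_comp (w : σ → ℤ) (hw : ∀ i, 0 ≤ w i) (x : σ → ℂ) (P : MvPolynomial σ ℂ) (e : ℕ) :
    eval x (weightedHomogeneousComponent w (e : ℤ) P)
      = ∑ m ∈ P.support.filter (fun m => degN w m = e),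
          P.coeff m * ∏ i ∈ m.support, x i ^ m i := by
  classical
  rw [weightedHomogeneousComponent_apply, map_sum]
  have hfil : P.support.filter (fun m => (Finsupp.weight w m : ℤ) = (e:ℤ))
      = P.support.filter (fun m => degN w m = e) := by
    refine Finset.filter_congr fun m _ => ?_
    rw [weight_eq_degN w hw m]
    exact_mod_cast Iff.rfl
  rw [hfil]
  refine Finset.sum_congr rfl fun m _ => ?_
  rw [eval_monomial]
  rfl

lemma eval_scaled_decomp (w : σ → ℤ) (hw : ∀ i, 0 ≤ w i) (c : ℂ) (x : σ → ℂ)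
    (P : MvPolynomial σ ℂ) (N : ℕ) (hN : ∀ m ∈ P.support, degN w m < N) :
    eval (fun i => c ^ (w i).toNat * x i) P
      = ∑ e ∈ Finset.range N, c ^ e * eval x (weightedHomogeneousComponent w (e:ℤ) P) := by
  classical
  rw [eval_scaled]
  rw [← Finset.sum_fiberwise_of_maps_to (g := fun m => degN w m)
      (fun m hm => Finset.mem_range.2 (hN m hm))
      (f := fun m => P.coeff m * c ^ degN w m * ∏ i ∈ m.support, x i ^ m i)]
  refine Finset.sum_congr rfl fun e _ => ?_
  rw [eval_comp w hw, Finset.mul_sum]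
  refine Finset.sum_congr rfl fun m hm => ?_
  have : degN w m = e := (Finset.mem_filter.1 hm).2
  rw [this]; ring

lemma weight_pderiv (w : σ → ℤ) (P : MvPolynomial σ ℂ) (d : ℤ)
    (hP : P.IsWeightedHomogeneous w d) (i : σ) :
    ∀ m ∈ (pderiv i P).support, (Finsupp.weight w m : ℤ) = d - w i := by
  classical
  intro m hm
  have h1 : pderiv i P = ∑ v ∈ P.support, monomial (v - Finsupp.single i 1) ((P.coeff v) * v i) := by
    conv_lhs => rw [P.as_sum]
    rw [map_sum]
    exact Finset.sum_congr rfl fun v _ => pderiv_monomial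
  rw [h1] at hm
  have h2 := MvPolynomial.support_sum hm
  rw [Finset.mem_biUnion] at h2
  obtain ⟨v, hv, hmv⟩ := h2
  rw [MvPolynomial.support_monomial] at hmv
  split_ifs at hmv with h0
  · exact absurd hmv (Finset.notMem_empty m)
  · have hme : m = v - Finsupp.single i 1 := Finset.mem_singleton.1 hmv
    have hvi : v i ≠ 0 := by
      intro hc
      exact h0 (by simp [hc])
    have hcv : P.coeff v ≠ 0 := by
      intro hc
      exact h0 (by simp [hc])
    have hvd := hP hcv
    have hvm : v = m + Finsupp.single i 1 := by
      subst hme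
      ext j
      by_cases hji : j = i
      · subst hji
        simp only [Finsupp.coe_add, Pi.add_apply, Finsupp.coe_tsub, Pi.sub_apply,
          Finsupp.single_eq_same]
        omega
      · simp [Finsupp.single_eq_of_ne' (Ne.symm hji)]
    rw [hvm, map_add] at hvd
    have hsingle : (Finsupp.weight w (Finsupp.single i 1) : ℤ) = w i := by
      rw [Finsupp.weight_apply, Finsupp.sum_single_index] <;> simp
    rw [hsingle] at hvd
    omega

lemma homog_support_zero (P : MvPolynomial σ ℂ) (h : ∀ m ∈ P.support, False) : P = 0 := by
  classical
  rw [P.as_sum]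
  exact Finset.sum_eq_zero fun m hm => absurd (h m hm) not_false

/-- the shift lemma -/
lemma shift_sum (w : σ → ℤ) (hw : ∀ i, 0 ≤ w i) (K N B : ℕ) (hKN : K + B < N)
    (P : MvPolynomial σ ℂ) (hbd : ∀ m ∈ P.support, degN w m ≤ B)
    (h : MvPolynomial σ ℂ → ℂ) (h0 : h 0 = 0) (c : ℂ) :
    ∑ e ∈ Finset.range N, c ^ (e + K) * h (weightedHomogeneousComponent w (e : ℤ) P)
      = ∑ e ∈ Finset.range N, c ^ e * h (weightedHomogeneousComponent w ((e : ℤ) - (K : ℤ)) P) := by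
  classical
  set F : ℕ → ℂ := fun e => c ^ e * h (weightedHomogeneousComponent w ((e : ℤ) - (K : ℤ)) P) with hF
  have hzero_small : ∀ e < K, F e = 0 := by
    intro e he
    have : weightedHomogeneousComponent w ((e : ℤ) - (K : ℤ)) P = 0 := by
      refine comp_eq_zero w _ P fun m hm => ?_
      have := weight_nonneg w hw m
      omega
    rw [hF]; simp [this, h0]
  have hzero_big : ∀ e, N ≤ e → F e = 0 := by
    intro e he
    have : weightedHomogeneousComponent w ((e : ℤ) - (K : ℤ)) P = 0 := by
      refine comp_eq_zero w _ P fun m hm => ?_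
      have h1 := hbd m hm
      have h2 := weight_eq_degN w hw m
      omega
    rw [hF]; simp [this, h0]
  have hL : ∀ e, c ^ (e + K) * h (weightedHomogeneousComponent w (e : ℤ) P) = F (e + K) := by
    intro e
    have h1 : ((e + K : ℕ) : ℤ) - (K : ℤ) = (e : ℤ) := by push_cast; ring
    rw [hF]
    simp only [h1]
  calc ∑ e ∈ Finset.range N, c ^ (e + K) * h (weightedHomogeneousComponent w (e : ℤ) P)
      = ∑ e ∈ Finset.range N, F (K + e) := by
        refine Finset.sum_congr rfl fun e _ => ?_
        rw [hL, add_comm]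
    _ = ∑ e ∈ Finset.range (K + N), F e := by
        rw [Finset.sum_range_add]
        have : ∑ e ∈ Finset.range K, F e = 0 :=
          Finset.sum_eq_zero fun e he => hzero_small e (Finset.mem_range.1 he)
        rw [this, zero_add]
    _ = ∑ e ∈ Finset.range N, F e := by
        have hKN' : K + N = N + K := by omega
        rw [hKN', Finset.sum_range_add]
        have : ∑ e ∈ Finset.range K, F (N + e) = 0 :=
          Finset.sum_eq_zero fun e _ => hzero_big (N + e) (by omega)
        rw [this, add_zero]

end CRaux

set_option maxHeartbeats 1600000 in
/-- each weighted homogeneous component of an infinitesimal CR-automorphism of M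
is again an infinitesimal CR-automorphism of M.  The component of weight `t` of
X = Σ_j Z^j ∂_{z_j} + Σ_l W^l ∂_{w_l} has coefficients the weighted homogeneous components of
weight `1 + t` of the `Z^j` and of weight `ℓ l + t` of the `W^l` (sums of the terms of those
weighted degrees in the Taylor expansions at 0). -/
theorem stmt2 (n k : ℕ) (hn : 0 < n) (hk : 0 < k) (ℓ : Fin k → ℤ)
    (hℓ : ∀ l, 1 < ℓ l) (hmono : Monotone ℓ)
    (Φ : Fin k → MvPolynomial (ZZU n k) ℂ)
    (hΦhom : ∀ l, (Φ l).IsWeightedHomogeneous (wtZZU n k ℓ) (ℓ l))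
    (hΦreal : ∀ l z w, starRingEnd ℂ (eval (zzuPt z w) (Φ l)) = eval (zzuPt z w) (Φ l))
    (Z : Fin n → MvPolynomial (ZW n k) ℂ) (W : Fin k → MvPolynomial (ZW n k) ℂ)
    (hX : IsCRAut n k Φ Z W) (t : ℤ) :
    IsCRAut n k Φ
      (fun j => weightedHomogeneousComponent (wtZW n k ℓ) (1 + t) (Z j))
      (fun l => weightedHomogeneousComponent (wtZW n k ℓ) (ℓ l + t) (W l)) := by
  classical
  intro z w hM l
  simp only []
  set wZ : ZW n k → ℤ := wtZW n k ℓ with hwZdef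
  set wU : ZZU n k → ℤ := wtZZU n k ℓ with hwUdef
  have hwZ : ∀ i, 0 ≤ wZ i := by
    intro i; cases i with
    | inl j => simp [hwZdef, wtZW]
    | inr m => simp only [hwZdef, wtZW, Sum.elim_inr]; linarith [hℓ m]
  have hwU : ∀ i, 0 ≤ wU i := by
    intro i; rcases i with j | j | m
    · simp [hwUdef, wtZZU]
    · simp [hwUdef, wtZZU]
    · simp only [hwUdef, wtZZU, Sum.elim_inr]; linarith [hℓ m]
  have hwU1 : ∀ j, wU (Sum.inl j) = 1 := fun j => rfl
  have hwU2 : ∀ j, wU (Sum.inr (Sum.inl j)) = 1 := fun j => rfl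
  have hwU3 : ∀ m, wU (Sum.inr (Sum.inr m)) = ℓ m := fun m => rfl
  set B : ℕ := (Finset.univ.sup fun m => (W m).support.sup (CRaux.degN wZ)) ⊔
      (Finset.univ.sup fun j => (Z j).support.sup (CRaux.degN wZ)) with hBdef
  have hbdW : ∀ m, ∀ mon ∈ (W m).support, CRaux.degN wZ mon ≤ B := by
    intro m mon hmon
    calc CRaux.degN wZ mon ≤ (W m).support.sup (CRaux.degN wZ) := Finset.le_sup hmon
      _ ≤ _ := le_trans (Finset.le_sup (f := fun m => (W m).support.sup (CRaux.degN wZ))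
          (Finset.mem_univ m)) le_sup_left
  have hbdZ : ∀ j, ∀ mon ∈ (Z j).support, CRaux.degN wZ mon ≤ B := by
    intro j mon hmon
    calc CRaux.degN wZ mon ≤ (Z j).support.sup (CRaux.degN wZ) := Finset.le_sup hmon
      _ ≤ _ := le_trans (Finset.le_sup (f := fun j => (Z j).support.sup (CRaux.degN wZ))
          (Finset.mem_univ j)) le_sup_right
  set N : ℕ := B + (ℓ l).toNat + 1 with hNdef
  set Dz : Fin n → ℂ := fun j => eval (zzuPt z w) (pderiv (Sum.inl j) (Φ l)) with hDz
  set Dzb : Fin n → ℂ := fun j => eval (zzuPt z w) (pderiv (Sum.inr (Sum.inl j)) (Φ l)) with hDzb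
  set Du : Fin k → ℂ := fun m => eval (zzuPt z w) (pderiv (Sum.inr (Sum.inr m)) (Φ l)) with hDu
  have hDuzero : ∀ m, ℓ l < ℓ m → pderiv (Sum.inr (Sum.inr m)) (Φ l) = 0 := by
    intro m hm
    refine CRaux.homog_support_zero _ fun mon hmon => ?_
    have h1 := CRaux.weight_pderiv wU (Φ l) (ℓ l) (hΦhom l) (Sum.inr (Sum.inr m)) mon hmon
    have h2 := CRaux.weight_nonneg wU hwU mon
    rw [hwU3] at h1
    omega
  set g : ℤ → ℂ := fun d =>
    (eval (zwPt z w) (weightedHomogeneousComponent wZ d (W l))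
        - starRingEnd ℂ (eval (zwPt z w) (weightedHomogeneousComponent wZ d (W l)))) / (2 * I)
      - (∑ j, eval (zwPt z w)
            (weightedHomogeneousComponent wZ (d - ((ℓ l - 1).toNat : ℤ)) (Z j)) * Dz j)
      - (∑ j, starRingEnd ℂ (eval (zwPt z w)
            (weightedHomogeneousComponent wZ (d - ((ℓ l - 1).toNat : ℤ)) (Z j))) * Dzb j)
      - (∑ m, ((eval (zwPt z w)
              (weightedHomogeneousComponent wZ (d - ((ℓ l - ℓ m).toNat : ℤ)) (W m))
            + starRingEnd ℂ (eval (zwPt z w)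
              (weightedHomogeneousComponent wZ (d - ((ℓ l - ℓ m).toNat : ℤ)) (W m)))) / 2) * Du m)
    with hgdef
  have hM' : ∀ m, (((w m).im : ℝ) : ℂ) = eval (zzuPt z w) (Φ m) := hM
  -- STEP A : the key identity
  have hkey : ∀ lam : ℝ, ∑ e ∈ Finset.range N, (lam : ℂ) ^ e * g (e : ℤ) = 0 := by
    intro lam
    set zs : Fin n → ℂ := fun j => (lam : ℂ) * z j with hzs
    set ws : Fin k → ℂ := fun m => (lam : ℂ) ^ (ℓ m).toNat * w m with hws
    have hpt1 : zwPt zs ws = fun i => (lam : ℂ) ^ ((wZ i).toNat) * zwPt z w i := by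
      funext i
      cases i with
      | inl j => simp [zwPt, hzs, hwZdef, wtZW]
      | inr m => simp [zwPt, hws, hwZdef, wtZW]
    have hpt2 : zzuPt zs ws = fun i => (lam : ℂ) ^ ((wU i).toNat) * zzuPt z w i := by
      funext i
      rcases i with j | j | m
      · simp [zzuPt, hzs, hwUdef, wtZZU]
      · simp [zzuPt, hzs, hwUdef, wtZZU, map_mul, Complex.conj_ofReal]
      · simp only [zzuPt, Sum.elim_inr, hwUdef, wtZZU, hws, ← Complex.ofReal_pow,
          Complex.re_ofReal_mul, Complex.ofReal_mul]
    have hmem : (zs, ws) ∈ Mset n k Φ := by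
      intro m
      show (((ws m).im : ℝ) : ℂ) = eval (zzuPt zs ws) (Φ m)
      rw [hpt2, CRaux.eval_scaled_homog wU hwU _ _ (Φ m) (ℓ m)
        (fun mon hmon => hΦhom m (MvPolynomial.mem_support_iff.1 hmon)), ← hM' m]
      show ((((lam : ℂ) ^ (ℓ m).toNat * w m).im : ℝ) : ℂ) = _
      rw [← Complex.ofReal_pow, Complex.im_ofReal_mul, Complex.ofReal_mul, Complex.ofReal_pow]
    have hDer : ∀ (i : ZZU n k), eval (zzuPt zs ws) (pderiv i (Φ l))
        = (lam : ℂ) ^ ((ℓ l - wU i).toNat) * eval (zzuPt z w) (pderiv i (Φ l)) := by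
      intro i
      rw [hpt2]
      exact CRaux.eval_scaled_homog wU hwU _ _ _ (ℓ l - wU i)
        (CRaux.weight_pderiv wU (Φ l) (ℓ l) (hΦhom l) i)
    have hDz1 : ∀ j, eval (zzuPt zs ws) (pderiv (Sum.inl j) (Φ l))
        = (lam : ℂ) ^ ((ℓ l - 1).toNat) * Dz j := by
      intro j
      rw [hDer (Sum.inl j), hwU1 j]
    have hDzb1 : ∀ j, eval (zzuPt zs ws) (pderiv (Sum.inr (Sum.inl j)) (Φ l))
        = (lam : ℂ) ^ ((ℓ l - 1).toNat) * Dzb j := by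
      intro j
      rw [hDer (Sum.inr (Sum.inl j)), hwU2 j]
    have hDu1 : ∀ m, eval (zzuPt zs ws) (pderiv (Sum.inr (Sum.inr m)) (Φ l))
        = (lam : ℂ) ^ ((ℓ l - ℓ m).toNat) * Du m := by
      intro m
      rw [hDer (Sum.inr (Sum.inr m)), hwU3 m]
    have hdec : ∀ (P : MvPolynomial (ZW n k) ℂ), (∀ mon ∈ P.support, CRaux.degN wZ mon ≤ B) →
        eval (zwPt zs ws) P = ∑ e ∈ Finset.range N, (lam : ℂ) ^ e *
          eval (zwPt z w) (weightedHomogeneousComponent wZ (e : ℤ) P) := by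
      intro P hP
      rw [hpt1]
      exact CRaux.eval_scaled_decomp wZ hwZ _ _ P N fun mon h => by
        have := hP mon h; omega
    have hK1B : (ℓ l - 1).toNat + B < N := by have := hℓ l; omega
    have hKmB : ∀ m : Fin k, (ℓ l - ℓ m).toNat + B < N := by intro m; have := hℓ m; omega
    have hp1 : (eval (zwPt zs ws) (W l) - starRingEnd ℂ (eval (zwPt zs ws) (W l))) / (2 * I)
        = ∑ e ∈ Finset.range N, (lam : ℂ) ^ e *
            ((eval (zwPt z w) (weightedHomogeneousComponent wZ (e : ℤ) (W l))
              - starRingEnd ℂ (eval (zwPt z w)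
                  (weightedHomogeneousComponent wZ (e : ℤ) (W l)))) / (2 * I)) := by
      rw [hdec (W l) (hbdW l), map_sum, ← Finset.sum_sub_distrib, Finset.sum_div]
      refine Finset.sum_congr rfl fun e _ => ?_
      rw [map_mul, map_pow, Complex.conj_ofReal]
      ring
    have hp2 : (∑ j, eval (zwPt zs ws) (Z j) * eval (zzuPt zs ws) (pderiv (Sum.inl j) (Φ l)))
        = ∑ e ∈ Finset.range N, (lam : ℂ) ^ e *
            (∑ j, eval (zwPt z w)
              (weightedHomogeneousComponent wZ ((e : ℤ) - ((ℓ l - 1).toNat : ℤ)) (Z j)) * Dz j) := by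
      have inner : ∀ j : Fin n,
          eval (zwPt zs ws) (Z j) * eval (zzuPt zs ws) (pderiv (Sum.inl j) (Φ l))
          = ∑ e ∈ Finset.range N, (lam : ℂ) ^ e *
              (eval (zwPt z w)
                (weightedHomogeneousComponent wZ ((e : ℤ) - ((ℓ l - 1).toNat : ℤ)) (Z j)) * Dz j) := by
        intro j
        rw [hdec (Z j) (hbdZ j), hDz1 j, Finset.sum_mul]
        have hs := CRaux.shift_sum wZ hwZ ((ℓ l - 1).toNat) N B hK1B (Z j) (hbdZ j)
            (fun Q => eval (zwPt z w) Q * Dz j) (by simp) (lam : ℂ)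
        rw [← hs]
        refine Finset.sum_congr rfl fun e _ => ?_
        rw [pow_add]; ring
      rw [Finset.sum_congr rfl fun j _ => inner j, Finset.sum_comm]
      exact Finset.sum_congr rfl fun e _ => (Finset.mul_sum _ _ _).symm
    have hp3 : (∑ j, starRingEnd ℂ (eval (zwPt zs ws) (Z j)) *
            eval (zzuPt zs ws) (pderiv (Sum.inr (Sum.inl j)) (Φ l)))
        = ∑ e ∈ Finset.range N, (lam : ℂ) ^ e *
            (∑ j, starRingEnd ℂ (eval (zwPt z w)
              (weightedHomogeneousComponent wZ ((e : ℤ) - ((ℓ l - 1).toNat : ℤ)) (Z j))) * Dzb j) := by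
      have inner : ∀ j : Fin n,
          starRingEnd ℂ (eval (zwPt zs ws) (Z j)) *
            eval (zzuPt zs ws) (pderiv (Sum.inr (Sum.inl j)) (Φ l))
          = ∑ e ∈ Finset.range N, (lam : ℂ) ^ e *
              (starRingEnd ℂ (eval (zwPt z w)
                (weightedHomogeneousComponent wZ ((e : ℤ) - ((ℓ l - 1).toNat : ℤ)) (Z j))) * Dzb j) := by
        intro j
        rw [hdec (Z j) (hbdZ j), hDzb1 j, map_sum, Finset.sum_mul]
        have hs := CRaux.shift_sum wZ hwZ ((ℓ l - 1).toNat) N B hK1B (Z j) (hbdZ j)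
            (fun Q => starRingEnd ℂ (eval (zwPt z w) Q) * Dzb j) (by simp) (lam : ℂ)
        rw [← hs]
        refine Finset.sum_congr rfl fun e _ => ?_
        rw [map_mul, map_pow, Complex.conj_ofReal, pow_add]; ring
      rw [Finset.sum_congr rfl fun j _ => inner j, Finset.sum_comm]
      exact Finset.sum_congr rfl fun e _ => (Finset.mul_sum _ _ _).symm
    have hp4 : (∑ m, ((eval (zwPt zs ws) (W m) + starRingEnd ℂ (eval (zwPt zs ws) (W m))) / 2) *
            eval (zzuPt zs ws) (pderiv (Sum.inr (Sum.inr m)) (Φ l)))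
        = ∑ e ∈ Finset.range N, (lam : ℂ) ^ e *
            (∑ m, ((eval (zwPt z w)
                (weightedHomogeneousComponent wZ ((e : ℤ) - ((ℓ l - ℓ m).toNat : ℤ)) (W m))
              + starRingEnd ℂ (eval (zwPt z w)
                (weightedHomogeneousComponent wZ ((e : ℤ) - ((ℓ l - ℓ m).toNat : ℤ)) (W m)))) / 2) * Du m) := by
      have inner : ∀ m : Fin k,
          ((eval (zwPt zs ws) (W m) + starRingEnd ℂ (eval (zwPt zs ws) (W m))) / 2) *
            eval (zzuPt zs ws) (pderiv (Sum.inr (Sum.inr m)) (Φ l))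
          = ∑ e ∈ Finset.range N, (lam : ℂ) ^ e *
              (((eval (zwPt z w)
                  (weightedHomogeneousComponent wZ ((e : ℤ) - ((ℓ l - ℓ m).toNat : ℤ)) (W m))
                + starRingEnd ℂ (eval (zwPt z w)
                  (weightedHomogeneousComponent wZ ((e : ℤ) - ((ℓ l - ℓ m).toNat : ℤ)) (W m)))) / 2) * Du m) := by
        intro m
        rw [hdec (W m) (hbdW m), hDu1 m, map_sum, ← Finset.sum_add_distrib, Finset.sum_div,
          Finset.sum_mul]
        have hs := CRaux.shift_sum wZ hwZ ((ℓ l - ℓ m).toNat) N B (hKmB m) (W m) (hbdW m)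
            (fun Q => ((eval (zwPt z w) Q + starRingEnd ℂ (eval (zwPt z w) Q)) / 2) * Du m)
            (by simp) (lam : ℂ)
        rw [← hs]
        refine Finset.sum_congr rfl fun e _ => ?_
        rw [map_mul, map_pow, Complex.conj_ofReal, pow_add]; ring
      rw [Finset.sum_congr rfl fun m _ => inner m, Finset.sum_comm]
      exact Finset.sum_congr rfl fun e _ => (Finset.mul_sum _ _ _).symm
    have hconn : ∑ e ∈ Finset.range N, (lam : ℂ) ^ e * g (e : ℤ) =
        (eval (zwPt zs ws) (W l) - starRingEnd ℂ (eval (zwPt zs ws) (W l))) / (2 * I)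
          - (∑ j, eval (zwPt zs ws) (Z j) * eval (zzuPt zs ws) (pderiv (Sum.inl j) (Φ l)))
          - (∑ j, starRingEnd ℂ (eval (zwPt zs ws) (Z j)) *
              eval (zzuPt zs ws) (pderiv (Sum.inr (Sum.inl j)) (Φ l)))
          - (∑ m, ((eval (zwPt zs ws) (W m) + starRingEnd ℂ (eval (zwPt zs ws) (W m))) / 2) *
              eval (zzuPt zs ws) (pderiv (Sum.inr (Sum.inr m)) (Φ l))) := by
      simp only [hgdef, mul_sub, Finset.sum_sub_distrib]
      rw [hp1, hp2, hp3, hp4]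
    rw [hconn]
    exact hX zs ws hmem l
  -- STEP B : coefficient extraction
  have hg : ∀ e < N, g (e : ℤ) = 0 := by
    intro e heN
    set q : Polynomial ℂ := ∑ e ∈ Finset.range N, Polynomial.C (g (e : ℤ)) * Polynomial.X ^ e
      with hq
    have hq0 : ∀ lam : ℝ, q.eval (lam : ℂ) = 0 := by
      intro lam
      rw [hq]
      simp only [Polynomial.eval_finset_sum, Polynomial.eval_mul, Polynomial.eval_C,
        Polynomial.eval_pow, Polynomial.eval_X]
      rw [← hkey lam]
      exact Finset.sum_congr rfl fun e _ => mul_comm _ _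
    have hqz : q = 0 := by
      refine Polynomial.eq_zero_of_infinite_isRoot q ?_
      refine Set.Infinite.mono ?_ (Set.infinite_range_of_injective Complex.ofReal_injective)
      rintro x ⟨lam, rfl⟩
      exact hq0 lam
    have hco : q.coeff e = g (e : ℤ) := by
      rw [hq]
      rw [Polynomial.finset_sum_coeff]
      simp only [Polynomial.coeff_C_mul, Polynomial.coeff_X_pow, mul_ite, mul_one, mul_zero]
      simp [Finset.sum_ite_eq, Finset.sum_ite_eq', heN]
    rw [← hco, hqz, Polynomial.coeff_zero]
  -- STEP C : conclude
  by_cases hcase : 0 ≤ ℓ l + t ∧ ℓ l + t < (N : ℤ)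
  · obtain ⟨h1, h2⟩ := hcase
    have h3 : (ℓ l + t).toNat < N := by omega
    have h0 := hg _ h3
    simp only [hgdef] at h0
    have he : (((ℓ l + t).toNat : ℕ) : ℤ) = ℓ l + t := by omega
    rw [he] at h0
    have hK1 : ℓ l + t - ((ℓ l - 1).toNat : ℤ) = 1 + t := by have := hℓ l; omega
    rw [hK1] at h0
    have hsum4 : (∑ m, ((eval (zwPt z w) (weightedHomogeneousComponent wZ (ℓ m + t) (W m))
          + starRingEnd ℂ (eval (zwPt z w)
              (weightedHomogeneousComponent wZ (ℓ m + t) (W m)))) / 2) * Du m)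
        = ∑ m, ((eval (zwPt z w)
              (weightedHomogeneousComponent wZ (ℓ l + t - ((ℓ l - ℓ m).toNat : ℤ)) (W m))
            + starRingEnd ℂ (eval (zwPt z w)
              (weightedHomogeneousComponent wZ (ℓ l + t - ((ℓ l - ℓ m).toNat : ℤ)) (W m)))) / 2) * Du m := by
      refine Finset.sum_congr rfl fun m _ => ?_
      by_cases hlm : ℓ m ≤ ℓ l
      · have hdeg : ℓ m + t = ℓ l + t - ((ℓ l - ℓ m).toNat : ℤ) := by omega
        rw [hdeg]
      · have hz : Du m = 0 := by
          simp only [hDu]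
          rw [hDuzero m (by omega)]
          simp
        rw [hz, mul_zero, mul_zero]
    rw [hsum4]
    exact h0
  · push_neg at hcase
    have hWl0 : weightedHomogeneousComponent wZ (ℓ l + t) (W l) = 0 := by
      refine CRaux.comp_eq_zero _ _ _ fun mon hmon => ?_
      have ha := hbdW l mon hmon
      have hb := CRaux.weight_eq_degN wZ hwZ mon
      have hc := hℓ l
      omega
    have hZ0 : ∀ j, weightedHomogeneousComponent wZ (1 + t) (Z j) = 0 := by
      intro j
      refine CRaux.comp_eq_zero _ _ _ fun mon hmon => ?_
      have ha := hbdZ j mon hmon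
      have hb := CRaux.weight_eq_degN wZ hwZ mon
      have hc := hℓ l
      omega
    have hW0 : ∀ m, ℓ m ≤ ℓ l → weightedHomogeneousComponent wZ (ℓ m + t) (W m) = 0 := by
      intro m hm
      refine CRaux.comp_eq_zero _ _ _ fun mon hmon => ?_
      have ha := hbdW m mon hmon
      have hb := CRaux.weight_eq_degN wZ hwZ mon
      have hc := hℓ l
      have hd := hℓ m
      omega
    have hs2 : (∑ j, eval (zwPt z w)
          (weightedHomogeneousComponent wZ (1 + t) (Z j)) * Dz j) = 0 :=
      Finset.sum_eq_zero fun j _ => by rw [hZ0 j]; simp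
    have hs3 : (∑ j, starRingEnd ℂ (eval (zwPt z w)
          (weightedHomogeneousComponent wZ (1 + t) (Z j))) * Dzb j) = 0 :=
      Finset.sum_eq_zero fun j _ => by rw [hZ0 j]; simp
    have hs4 : (∑ m, ((eval (zwPt z w) (weightedHomogeneousComponent wZ (ℓ m + t) (W m))
          + starRingEnd ℂ (eval (zwPt z w)
              (weightedHomogeneousComponent wZ (ℓ m + t) (W m)))) / 2) * Du m) = 0 := by
      refine Finset.sum_eq_zero fun m _ => ?_
      by_cases hlm : ℓ m ≤ ℓ l
      · rw [hW0 m hlm]; simp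
      · have hz : Du m = 0 := by
          simp only [hDu]
          rw [hDuzero m (by omega)]
          simp
        rw [hz, mul_zero]
    rw [hWl0, hs2, hs3, hs4]
    simp
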